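/- Let λ < 0 and a > 0, and define r̃ : [−π, π] → ℝ by r̃(θ) = (sin θ − √(sin² θ + 4λ²a²))/(2λ). Then r̃ is differentiable on [−π, π] with r̃'(θ) < 0 for θ ∈ (−π/2, π/2), r̃'(−π/2) = r̃'(π/2) = 0, and r̃'(θ) > 0 for θ ∈ [−π, −π/2) ∪ (π/2, π]. Consequently r̃(−π) = r̃(0) = r̃(π) = a, and 0 < r̃(π/2) ≤ r̃(θ) ≤ r̃(−π/2) for all θ ∈ [−π, π], with the minimum attained only at θ = π/2 and the maximum only at θ = −π/2. -/

import Mathlib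

open Real

/-- Monotonicity properties of the radial coordinate of the full nodary curve
`r̃(θ) = (sin θ − √(sin²θ + 4λ²a²))/(2λ)` for `λ < 0`, `a > 0`. -/
theorem nodary_radial_monotonicity (lam a : ℝ) (hlam : lam < 0) (ha : 0 < a)
    (rt : ℝ → ℝ)
    (hrt : ∀ θ, rt θ =
      (Real.sin θ - Real.sqrt ((Real.sin θ) ^ 2 + 4 * lam ^ 2 * a ^ 2)) / (2 * lam)) :
    (∀ θ ∈ Set.Icc (-Real.pi) Real.pi, DifferentiableAt ℝ rt θ) ∧
    (∀ θ ∈ Set.Ioo (-(Real.pi / 2)) (Real.pi / 2), deriv rt θ < 0) ∧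
    deriv rt (-(Real.pi / 2)) = 0 ∧ deriv rt (Real.pi / 2) = 0 ∧
    (∀ θ ∈ Set.Ico (-Real.pi) (-(Real.pi / 2)), 0 < deriv rt θ) ∧
    (∀ θ ∈ Set.Ioc (Real.pi / 2) Real.pi, 0 < deriv rt θ) ∧
    rt (-Real.pi) = a ∧ rt 0 = a ∧ rt Real.pi = a ∧
    0 < rt (Real.pi / 2) ∧
    (∀ θ ∈ Set.Icc (-Real.pi) Real.pi, rt (Real.pi / 2) ≤ rt θ ∧ rt θ ≤ rt (-(Real.pi / 2))) ∧
    (∀ θ ∈ Set.Icc (-Real.pi) Real.pi, rt θ = rt (Real.pi / 2) → θ = Real.pi / 2) ∧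
    (∀ θ ∈ Set.Icc (-Real.pi) Real.pi, rt θ = rt (-(Real.pi / 2)) → θ = -(Real.pi / 2)) := by
  have hpi := Real.pi_pos
  have h2lam : (2:ℝ) * lam < 0 := by linarith
  set c := 4 * lam ^ 2 * a ^ 2 with hc_def
  have hlam' : lam ≠ 0 := ne_of_lt hlam
  have h2ne : (2:ℝ) * lam ≠ 0 := ne_of_lt h2lam
  have hc : 0 < c := by rw [hc_def]; positivity
  have hkey : ∀ s : ℝ, |s| < Real.sqrt (s ^ 2 + c) := by
    intro s
    rw [← Real.sqrt_sq_eq_abs]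
    exact Real.sqrt_lt_sqrt (sq_nonneg s) (by linarith)
  have hsq_pos : ∀ s : ℝ, 0 < Real.sqrt (s ^ 2 + c) := fun s =>
    lt_of_le_of_lt (abs_nonneg s) (hkey s)
  have hslt : ∀ s : ℝ, s < Real.sqrt (s ^ 2 + c) := fun s =>
    lt_of_le_of_lt (le_abs_self s) (hkey s)
  set g : ℝ → ℝ := fun s => s - Real.sqrt (s ^ 2 + c) with hg_def
  have hg_deriv : ∀ s, HasDerivAt g (1 - s / Real.sqrt (s ^ 2 + c)) s := by
    intro s
    have h1 : HasDerivAt (fun s : ℝ => s ^ 2 + c) (2 * s) s := by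
      simpa using ((hasDerivAt_pow 2 s).add_const c)
    have h2 : HasDerivAt (fun s : ℝ => Real.sqrt (s ^ 2 + c))
        ((2 * s) / (2 * Real.sqrt (s ^ 2 + c))) s := h1.sqrt (ne_of_gt (by nlinarith [sq_nonneg s]))
    have h3 : HasDerivAt g _ s := (hasDerivAt_id' s).sub h2
    convert h3 using 1
    have hne := (hsq_pos s).ne'
    field_simp
  have hg_deriv_pos : ∀ s : ℝ, 0 < 1 - s / Real.sqrt (s ^ 2 + c) := by
    intro s
    rw [sub_pos, div_lt_one (hsq_pos s)]
    exact hslt s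
  have hg_mono : StrictMono g := by
    apply strictMono_of_deriv_pos
    intro s
    rw [(hg_deriv s).deriv]
    exact hg_deriv_pos s
  have hrt_eq : ∀ θ, rt θ = g (Real.sin θ) / (2 * lam) := fun θ => hrt θ
  have hrt_deriv : ∀ θ, HasDerivAt rt
      ((1 - Real.sin θ / Real.sqrt ((Real.sin θ) ^ 2 + c)) * Real.cos θ / (2 * lam)) θ := by
    intro θ
    have h1 := ((hg_deriv (Real.sin θ)).comp θ (Real.hasDerivAt_sin θ)).div_const (2 * lam)
    have hfun : rt = fun θ => g (Real.sin θ) / (2 * lam) := funext hrt_eq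
    rw [hfun]
    exact h1
  -- helper: sign of derivative
  have hderiv_val : ∀ θ, deriv rt θ =
      (1 - Real.sin θ / Real.sqrt ((Real.sin θ) ^ 2 + c)) * Real.cos θ / (2 * lam) :=
    fun θ => (hrt_deriv θ).deriv
  have hA : ∀ θ, 0 < 1 - Real.sin θ / Real.sqrt ((Real.sin θ) ^ 2 + c) :=
    fun θ => hg_deriv_pos _
  -- values at 0, ±π
  have hsqc : Real.sqrt ((0:ℝ) ^ 2 + c) = -(2 * lam) * a := by
    rw [show (0:ℝ) ^ 2 + c = (-(2 * lam) * a) ^ 2 by rw [hc_def]; ring]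
    exact Real.sqrt_sq (by nlinarith)
  have hval : ∀ θ, Real.sin θ = 0 → rt θ = a := by
    intro θ hs
    rw [hrt_eq, hg_def]
    simp only [hs]
    rw [hsqc]
    rw [show (0:ℝ) - -(2 * lam) * a = 2 * lam * a by ring]
    exact mul_div_cancel_left₀ a h2ne
  -- positivity of rt
  have hrt_pos : ∀ θ, 0 < rt θ := by
    intro θ
    rw [hrt_eq]
    apply div_pos_of_neg_of_neg _ h2lam
    simpa [hg_def, sub_neg] using hslt (Real.sin θ)
  -- antitone transfer: x ≤ y → y/(2λ) ≤ x/(2λ)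
  have hdivle : ∀ x y : ℝ, x ≤ y → y / (2 * lam) ≤ x / (2 * lam) := by
    intro x y h
    have := mul_le_mul_of_nonpos_right h (inv_nonpos.mpr h2lam.le)
    simpa [div_eq_mul_inv] using this
  -- sin values at ±π/2
  have hsin_half : Real.sin (Real.pi / 2) = 1 := Real.sin_pi_div_two
  have hsin_neg_half : Real.sin (-(Real.pi / 2)) = -1 := by
    rw [Real.sin_neg, Real.sin_pi_div_two]
  refine ⟨fun θ _ => (hrt_deriv θ).differentiableAt, ?_, ?_, ?_, ?_, ?_, ?_, ?_, ?_, ?_, ?_, ?_, ?_⟩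
  · intro θ hθ
    rw [hderiv_val]
    exact div_neg_of_pos_of_neg (mul_pos (hA θ) (Real.cos_pos_of_mem_Ioo hθ)) h2lam
  · rw [hderiv_val]
    simp [Real.cos_pi_div_two]
  · rw [hderiv_val]
    simp [Real.cos_pi_div_two]
  · intro θ hθ
    rw [hderiv_val]
    have hcos : Real.cos θ < 0 := by
      rw [← Real.cos_neg]
      apply Real.cos_neg_of_pi_div_two_lt_of_lt
      · linarith [hθ.2]
      · linarith [hθ.1]
    exact div_pos_of_neg_of_neg (mul_neg_of_pos_of_neg (hA θ) hcos) h2lam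
  · intro θ hθ
    rw [hderiv_val]
    have hcos : Real.cos θ < 0 :=
      Real.cos_neg_of_pi_div_two_lt_of_lt hθ.1 (by linarith [hθ.2])
    exact div_pos_of_neg_of_neg (mul_neg_of_pos_of_neg (hA θ) hcos) h2lam
  · exact hval _ (by simp)
  · exact hval _ Real.sin_zero
  · exact hval _ Real.sin_pi
  · exact hrt_pos _
  · intro θ _
    constructor
    · rw [hrt_eq θ, hrt_eq, hsin_half]
      exact hdivle _ _ (hg_mono.le_iff_le.mpr (Real.sin_le_one θ))
    · rw [hrt_eq θ, hrt_eq, hsin_neg_half]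
      exact hdivle _ _ (hg_mono.le_iff_le.mpr (Real.neg_one_le_sin θ))
  · intro θ hθ heq
    rw [hrt_eq θ, hrt_eq, hsin_half] at heq
    have heq' : g (Real.sin θ) = g 1 := by
      field_simp at heq; exact heq
    have hs : Real.sin θ = 1 := hg_mono.injective heq'
    obtain ⟨k, hk⟩ := Real.sin_eq_one_iff.mp hs
    have hk0 : k = 0 := by
      have h1 : (k:ℝ) < 1 := by nlinarith [hθ.2]
      have h2 : (-1:ℝ) < k := by nlinarith [hθ.1]
      have h1' : k < 1 := by exact_mod_cast h1
      have h2' : (-1:ℤ) < k := by exact_mod_cast h2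
      omega
    rw [hk0] at hk
    push_cast at hk
    linarith [hk]
  · intro θ hθ heq
    rw [hrt_eq θ, hrt_eq, hsin_neg_half] at heq
    have heq' : g (Real.sin θ) = g (-1) := by
      field_simp at heq; exact heq
    have hs : Real.sin θ = -1 := hg_mono.injective heq'
    obtain ⟨k, hk⟩ := Real.sin_eq_neg_one_iff.mp hs
    have hk0 : k = 0 := by
      have h1 : (k:ℝ) < 1 := by nlinarith [hθ.2]
      have h2 : (-1:ℝ) < k := by nlinarith [hθ.1]
      have h1' : k < 1 := by exact_mod_cast h1
      have h2' : (-1:ℤ) < k := by exact_mod_cast h2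
      omega
    rw [hk0] at hk
    push_cast at hk
    linarith [hk]
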